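/- Under the hypotheses of the local field distortion theorem, the asymmetric field with projected attraction and exact repulsion evaluated when the model distribution equals the data distribution, V_{p,p}^U(x) = μ_U(x) − μ(x), satisfies ‖V_{p,p}^U(x)‖ ≤ (4R / (√N · d(x))) ‖r(x)‖_2. -/

import Mathlib

open BigOperators

/-- Equilibrium residual of the asymmetric DriftXpress field: when the model
distribution equals the data distribution, `V_{p,p}^U(x) = μ_U(x) − μ(x)` is
controlled by the same local distortion bound. -/
theorem driftxpress_equilibrium_residual
    {D N : ℕ} (k kU : EuclideanSpace ℝ (Fin D) → EuclideanSpace ℝ (Fin D) → ℝ)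
    (hk : ∀ a b, 0 ≤ k a b) (hkU : ∀ a b, 0 ≤ kU a b)
    (y : Fin N → EuclideanSpace ℝ (Fin D)) (R : ℝ)
    (hy : ∀ j, ‖y j‖ ≤ R)
    (x : EuclideanSpace ℝ (Fin D))
    (r : Fin N → ℝ) (hr : ∀ j, r j = k x (y j) - kU x (y j))
    (d : ℝ) (hd : d = (1 / (N : ℝ)) * ∑ j, k x (y j)) (hdpos : 0 < d)
    (hres : Real.sqrt (∑ j, r j ^ 2) ≤ Real.sqrt N * d / 2)
    (μ μU V : EuclideanSpace ℝ (Fin D))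
    (hμ : μ = (∑ j, k x (y j))⁻¹ • ∑ j, k x (y j) • y j)
    (hμU : μU = (∑ j, kU x (y j))⁻¹ • ∑ j, kU x (y j) • y j)
    (hV : V = μU - μ) :
    ‖V‖ ≤ (4 * R / (Real.sqrt N * d)) * Real.sqrt (∑ j, r j ^ 2) := by
  set S : ℝ := ∑ j, k x (y j) with hS
  set S' : ℝ := ∑ j, kU x (y j) with hS'
  set E : ℝ := Real.sqrt (∑ j, r j ^ 2) with hE
  have hNpos : 0 < N := by
    by_contra h
    have hN0 : N = 0 := Nat.eq_zero_of_not_pos h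
    subst hN0
    simp [hS, Finset.sum_empty] at hd
    rw [hd] at hdpos; exact lt_irrefl 0 hdpos
  have hNR : (0:ℝ) < N := by exact_mod_cast hNpos
  have hsqrtN : (0:ℝ) < Real.sqrt N := Real.sqrt_pos.mpr hNR
  have hSval : S = N * d := by
    rw [hd]; field_simp
  have hSpos : 0 < S := by rw [hSval]; positivity
  have hE0 : 0 ≤ E := Real.sqrt_nonneg _
  -- R ≥ 0
  have hR0 : 0 ≤ R := le_trans (norm_nonneg _) (hy ⟨0, hNpos⟩)
  -- Cauchy–Schwarz-style bound: ∑ |r j| ≤ √N * E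
  have habs : ∑ j, |r j| ≤ Real.sqrt N * E := by
    have h1 : (∑ j, |r j|) ^ 2 ≤ (N : ℝ) * ∑ j, r j ^ 2 := by
      have := sq_sum_le_card_mul_sum_sq (s := Finset.univ) (f := fun j => |r j|)
      simpa [sq_abs] using this
    have h2 : ∑ j, |r j| ≤ Real.sqrt ((N : ℝ) * ∑ j, r j ^ 2) := by
      have := Real.sqrt_le_sqrt h1
      rwa [Real.sqrt_sq (by positivity)] at this
    calc ∑ j, |r j| ≤ Real.sqrt ((N : ℝ) * ∑ j, r j ^ 2) := h2
      _ = Real.sqrt N * E := by rw [Real.sqrt_mul (le_of_lt hNR)]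
  have hsqE : Real.sqrt N * E ≤ N * d / 2 := by
    have : Real.sqrt N * E ≤ Real.sqrt N * (Real.sqrt N * d / 2) :=
      mul_le_mul_of_nonneg_left hres (le_of_lt hsqrtN)
    calc Real.sqrt N * E ≤ Real.sqrt N * (Real.sqrt N * d / 2) := this
      _ = (Real.sqrt N * Real.sqrt N) * d / 2 := by ring
      _ = N * d / 2 := by rw [Real.mul_self_sqrt (le_of_lt hNR)]
  -- S' = S - ∑ r j
  have hS'eq : S' = S - ∑ j, r j := by
    rw [hS', hS, ← Finset.sum_sub_distrib]
    exact Finset.sum_congr rfl fun j _ => by rw [hr j]; ring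
  have hsumr : ∑ j, r j ≤ ∑ j, |r j| := Finset.sum_le_sum fun j _ => le_abs_self _
  have hS'lb : N * d / 2 ≤ S' := by
    rw [hS'eq, hSval]
    have : ∑ j, r j ≤ N * d / 2 := le_trans hsumr (le_trans habs hsqE)
    linarith
  have hS'pos : 0 < S' := lt_of_lt_of_le (by positivity) hS'lb
  -- ‖μ‖ ≤ R
  have hμR : ‖μ‖ ≤ R := by
    rw [hμ]
    rw [norm_smul, norm_inv, Real.norm_eq_abs, abs_of_pos hSpos]
    rw [inv_mul_le_iff₀ hSpos]
    calc ‖∑ j, k x (y j) • y j‖ ≤ ∑ j, ‖k x (y j) • y j‖ := norm_sum_le _ _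
      _ ≤ ∑ j, k x (y j) * R := by
          refine Finset.sum_le_sum fun j _ => ?_
          rw [norm_smul, Real.norm_eq_abs, abs_of_nonneg (hk _ _)]
          exact mul_le_mul_of_nonneg_left (hy j) (hk _ _)
      _ = R * S := by rw [← Finset.sum_mul, hS]; ring
      _ = S * R := mul_comm _ _
  -- key identity: S' • V = - ∑ r j • (y j - μ)
  have hSμ : S • μ = ∑ j, k x (y j) • y j := by
    rw [hμ, smul_smul, mul_inv_cancel₀ (ne_of_gt hSpos), one_smul]
  have hS'μU : S' • μU = ∑ j, kU x (y j) • y j := by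
    rw [hμU, smul_smul, mul_inv_cancel₀ (ne_of_gt hS'pos), one_smul]
  have hkey : S' • V = - ∑ j, r j • (y j - μ) := by
    rw [hV, smul_sub, hS'μU]
    have h1 : S' • μ = ∑ j, kU x (y j) • μ := by
      rw [hS', Finset.sum_smul]
    have h2 : (∑ j, k x (y j) • (y j - μ)) = 0 := by
      have : (∑ j, k x (y j) • (y j - μ)) = (∑ j, k x (y j) • y j) - S • μ := by
        rw [hS, Finset.sum_smul, ← Finset.sum_sub_distrib]
        exact Finset.sum_congr rfl fun j _ => smul_sub _ _ _
      rw [this, hSμ, sub_self]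
    have h3 : (∑ j, kU x (y j) • y j) - ∑ j, kU x (y j) • μ
        = ∑ j, kU x (y j) • (y j - μ) := by
      rw [← Finset.sum_sub_distrib]
      exact Finset.sum_congr rfl fun j _ => (smul_sub _ _ _).symm
    rw [h1, h3]
    have h4 : ∀ j, kU x (y j) • (y j - μ) = k x (y j) • (y j - μ) - r j • (y j - μ) := by
      intro j
      rw [hr j, sub_smul]
      abel
    rw [Finset.sum_congr rfl fun j _ => h4 j, Finset.sum_sub_distrib, h2]
    abel
  -- norm bound
  have hnorm : S' * ‖V‖ ≤ 2 * R * (Real.sqrt N * E) := by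
    have h5 : ‖S' • V‖ = S' * ‖V‖ := by
      rw [norm_smul, Real.norm_eq_abs, abs_of_pos hS'pos]
    have h6 : ‖S' • V‖ ≤ ∑ j, |r j| * (2 * R) := by
      rw [hkey, norm_neg]
      calc ‖∑ j, r j • (y j - μ)‖ ≤ ∑ j, ‖r j • (y j - μ)‖ := norm_sum_le _ _
        _ ≤ ∑ j, |r j| * (2 * R) := by
            refine Finset.sum_le_sum fun j _ => ?_
            rw [norm_smul, Real.norm_eq_abs]
            refine mul_le_mul_of_nonneg_left ?_ (abs_nonneg _)
            calc ‖y j - μ‖ ≤ ‖y j‖ + ‖μ‖ := norm_sub_le _ _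
              _ ≤ R + R := add_le_add (hy j) hμR
              _ = 2 * R := by ring
    have h7 : ∑ j, |r j| * (2 * R) = (∑ j, |r j|) * (2 * R) := by
      rw [Finset.sum_mul]
    have h8 : (∑ j, |r j|) * (2 * R) ≤ (Real.sqrt N * E) * (2 * R) :=
      mul_le_mul_of_nonneg_right habs (by positivity)
    rw [← h5]
    calc ‖S' • V‖ ≤ ∑ j, |r j| * (2 * R) := h6
      _ = (∑ j, |r j|) * (2 * R) := h7
      _ ≤ (Real.sqrt N * E) * (2 * R) := h8
      _ = 2 * R * (Real.sqrt N * E) := by ring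
  -- conclude
  have hVle : ‖V‖ ≤ 2 * R * (Real.sqrt N * E) / S' := by
    rw [le_div_iff₀ hS'pos]
    linarith [hnorm]
  have hfinal : 2 * R * (Real.sqrt N * E) / S' ≤ 2 * R * (Real.sqrt N * E) / (N * d / 2) := by
    apply div_le_div_of_nonneg_left (by positivity) (by positivity) hS'lb
  have heq : 2 * R * (Real.sqrt N * E) / (N * d / 2) = (4 * R / (Real.sqrt N * d)) * E := by
    have hN' : Real.sqrt N * Real.sqrt N = (N:ℝ) := Real.mul_self_sqrt (le_of_lt hNR)
    field_simp
    linear_combination (4 * R * E) * hN'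
  calc ‖V‖ ≤ 2 * R * (Real.sqrt N * E) / S' := hVle
    _ ≤ 2 * R * (Real.sqrt N * E) / (N * d / 2) := hfinal
    _ = (4 * R / (Real.sqrt N * d)) * E := heq
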